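/- Let d ≥ 1 and s ≥ 1 be integers and let v ∈ ℝ^d be nonzero. The expected number of nonzero coordinates of the nonuniform quantization of v with the NUQSGD levels L̂ satisfies E[ #{i : Q_s(v)_i ≠ 0} ] ≤ 2^{2s} + 2^s √d. -/

import Mathlib

open MeasureTheory Real

noncomputable section

/-- The index of the quantization bin containing the normalized coordinate `r`. -/
def levIdx (l : ℕ → ℝ) (s : ℕ) (r : ℝ) : ℕ := sSup {j | j ≤ s ∧ l j ≤ r}

/-- The probability of rounding the normalized coordinate `r` up to the next level. -/
def quantP (l : ℕ → ℝ) (s : ℕ) (r : ℝ) : ℝ :=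
  (r - l (levIdx l s r)) / (l (levIdx l s r + 1) - l (levIdx l s r))

/-- The (random) nonuniform quantization of `v`, driven by the uniform noise vector `u`:
coordinate `i` is `‖v‖ · sign vᵢ · hᵢ`, where `hᵢ` is the upper adjacent level with
probability `p(rᵢ)` and the lower adjacent level otherwise. -/
def quant (l : ℕ → ℝ) (s : ℕ) {d : ℕ} (v : EuclideanSpace ℝ (Fin d))
    (u : Fin d → ℝ) : EuclideanSpace ℝ (Fin d) :=
  WithLp.toLp 2 fun i =>
    ‖v‖ * Real.sign (v i) *
      (if u i ≤ quantP l s (|v i| / ‖v‖)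
       then l (levIdx l s (|v i| / ‖v‖) + 1)
       else l (levIdx l s (|v i| / ‖v‖)))

/-- The uniform probability measure on the cube `[0,1]^d`, driving the quantization noise. -/
def unifCube (d : ℕ) : Measure (Fin d → ℝ) :=
  Measure.pi fun _ => volume.restrict (Set.Icc (0:ℝ) 1)

/-- `l` is a valid sequence of quantization levels `l 0 = 0 < l 1 < ⋯ < l (s+1) = 1`. -/
def IsLevels (l : ℕ → ℝ) (s : ℕ) : Prop :=
  l 0 = 0 ∧ l (s+1) = 1 ∧ ∀ j ≤ s, l j < l (j+1)

/-- The exponentially spaced NUQSGD levels `(0, 2^{-s}, 2^{1-s}, …, 2^{-1}, 1)`: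
`l 0 = 0` and `l j = 2^{j-1-s}` for `j = 1, …, s+1`. -/
def nuqLevels (s : ℕ) : ℕ → ℝ :=
  fun j => if j = 0 then 0 else 2 ^ ((j : ℤ) - 1 - (s : ℤ))

lemma nuqLevels_zero (s : ℕ) : nuqLevels s 0 = 0 := rfl

lemma nuqLevels_one (s : ℕ) : nuqLevels s 1 = 2 ^ (-(s:ℤ)) := by
  simp only [nuqLevels, if_neg one_ne_zero]
  norm_num

lemma nuqLevels_pos (s : ℕ) {j : ℕ} (hj : j ≠ 0) : 0 < nuqLevels s j := by
  simp only [nuqLevels, if_neg hj]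
  positivity

lemma levIdx_nuq_zero {s : ℕ} {r : ℝ} (hr0 : 0 ≤ r) (hr : r < 2 ^ (-(s:ℤ))) :
    levIdx (nuqLevels s) s r = 0 := by
  have hset : {j | j ≤ s ∧ nuqLevels s j ≤ r} = {0} := by
    ext j
    simp only [Set.mem_setOf_eq, Set.mem_singleton_iff]
    constructor
    · rintro ⟨hjs, hjr⟩
      by_contra hj
      have h1 : (2:ℝ) ^ (-(s:ℤ)) ≤ nuqLevels s j := by
        rw [nuqLevels, if_neg hj]
        apply zpow_le_zpow_right₀ one_le_two
        have : 1 ≤ (j:ℤ) := by exact_mod_cast Nat.one_le_iff_ne_zero.mpr hj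
        omega
      linarith
    · rintro rfl
      exact ⟨Nat.zero_le s, by rw [nuqLevels_zero]; exact hr0⟩
  rw [levIdx, hset, csSup_singleton]

lemma levIdx_nuq_pos {s : ℕ} {r : ℝ} (hs : 1 ≤ s) (hr : (2:ℝ) ^ (-(s:ℤ)) ≤ r) :
    1 ≤ levIdx (nuqLevels s) s r := by
  apply le_csSup ⟨s, fun j hj => hj.1⟩
  exact ⟨hs, by rw [nuqLevels_one]; exact hr⟩

instance unifCube_prob (d : ℕ) : IsProbabilityMeasure (unifCube d) := by
  have : ∀ _i : Fin d, IsProbabilityMeasure (volume.restrict (Set.Icc (0:ℝ) 1)) :=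
    fun _ => ⟨by simp⟩
  unfold unifCube
  infer_instance

lemma unifCube_eval (d : ℕ) (i : Fin d) (A : Set ℝ) :
    unifCube d (Function.eval i ⁻¹' A) = volume.restrict (Set.Icc (0:ℝ) 1) A := by
  classical
  rw [unifCube, Set.eval_preimage, Measure.pi_pi]
  rw [Finset.prod_eq_single i]
  · rw [Function.update_self]
  · intro j _ hj
    rw [Function.update_of_ne hj]
    simp
  · simp

lemma coord_bound (d s : ℕ) (hs : 1 ≤ s) (v : EuclideanSpace ℝ (Fin d)) (hv : v ≠ 0)
    (i : Fin d) :
    MeasurableSet {u : Fin d → ℝ | quant (nuqLevels s) s v u i ≠ 0} ∧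
    ((unifCube d) {u : Fin d → ℝ | quant (nuqLevels s) s v u i ≠ 0}).toReal ≤
      (if (2:ℝ) ^ (-(s:ℤ)) ≤ |v i| / ‖v‖ then 1 else 2 ^ s * (|v i| / ‖v‖)) := by
  have hN : (0:ℝ) < ‖v‖ := norm_pos_iff.mpr hv
  set r : ℝ := |v i| / ‖v‖ with hr_def
  have hr0 : 0 ≤ r := by positivity
  by_cases hvi : v i = 0
  · have hr_eq : r = 0 := by simp [hr_def, hvi]
    have hempty : {u : Fin d → ℝ | quant (nuqLevels s) s v u i ≠ 0} = ∅ := by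
      ext u
      simp [quant, hvi, Real.sign_zero]
    rw [hempty]
    have hcond : ¬ ((2:ℝ) ^ (-(s:ℤ)) ≤ r) := by
      rw [hr_eq]; push_neg; positivity
    rw [if_neg hcond, hr_eq]
    exact ⟨MeasurableSet.empty, by simp⟩
  · by_cases hcase : (2:ℝ) ^ (-(s:ℤ)) ≤ r
    · -- set is univ
      have huniv : {u : Fin d → ℝ | quant (nuqLevels s) s v u i ≠ 0} = Set.univ := by
        ext u
        simp only [Set.mem_setOf_eq, Set.mem_univ, iff_true]
        have hk : 1 ≤ levIdx (nuqLevels s) s r := levIdx_nuq_pos hs hcase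
        have h1 : nuqLevels s (levIdx (nuqLevels s) s r + 1) ≠ 0 :=
          ne_of_gt (nuqLevels_pos s (by omega))
        have h2 : nuqLevels s (levIdx (nuqLevels s) s r) ≠ 0 :=
          ne_of_gt (nuqLevels_pos s (by omega))
        apply mul_ne_zero (mul_ne_zero (ne_of_gt hN) (Real.sign_eq_zero_iff.not.mpr hvi))
        split <;> assumption
      rw [huniv, if_pos hcase]
      simp
    · -- set is {u | u i ≤ quantP}
      push_neg at hcase
      have hidx : levIdx (nuqLevels s) s r = 0 := levIdx_nuq_zero hr0 hcase
      have hP : quantP (nuqLevels s) s r = r * 2 ^ (s:ℤ) := by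
        rw [quantP, hidx, nuqLevels_zero, nuqLevels_one]
        rw [sub_zero, sub_zero, div_eq_mul_inv, ← zpow_neg, neg_neg]
      have hset : {u : Fin d → ℝ | quant (nuqLevels s) s v u i ≠ 0} =
          Function.eval i ⁻¹' Set.Iic (quantP (nuqLevels s) s r) := by
        ext u
        simp only [Set.mem_setOf_eq, Set.mem_preimage, Set.mem_Iic, Function.eval]
        rw [quant, PiLp.toLp_apply]
        constructor
        · intro h
          by_contra hu
          rw [if_neg hu, hidx, nuqLevels_zero, mul_zero] at h
          exact h rfl
        · intro h
          rw [if_pos h]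
          exact mul_ne_zero (mul_ne_zero (ne_of_gt hN) (Real.sign_eq_zero_iff.not.mpr hvi))
            (ne_of_gt (nuqLevels_pos s (Nat.succ_ne_zero _)))
      rw [hset, if_neg (not_le.mpr hcase)]
      refine ⟨(measurable_pi_apply i) measurableSet_Iic, ?_⟩
      rw [unifCube_eval]
      have hPnn : 0 ≤ quantP (nuqLevels s) s r := by rw [hP]; positivity
      have hle : (volume.restrict (Set.Icc (0:ℝ) 1)) (Set.Iic (quantP (nuqLevels s) s r)) ≤
          ENNReal.ofReal (quantP (nuqLevels s) s r) := by
        rw [Measure.restrict_apply measurableSet_Iic]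
        calc volume (Set.Iic (quantP (nuqLevels s) s r) ∩ Set.Icc (0:ℝ) 1)
            ≤ volume (Set.Icc (0:ℝ) (quantP (nuqLevels s) s r)) := by
              apply measure_mono
              rintro x ⟨hx1, hx2, _⟩
              exact ⟨hx2, hx1⟩
          _ = ENNReal.ofReal (quantP (nuqLevels s) s r) := by rw [Real.volume_Icc, sub_zero]
      calc ((volume.restrict (Set.Icc (0:ℝ) 1)) (Set.Iic (quantP (nuqLevels s) s r))).toReal
          ≤ quantP (nuqLevels s) s r := ENNReal.toReal_le_of_le_ofReal hPnn hle
        _ = 2 ^ s * r := by rw [hP, mul_comm, zpow_natCast]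


/-- **Lemma 5 (expected sparsity)**: with the NUQSGD levels, the expected number of nonzero
coordinates of `Q_s(v)` is at most `2^{2s} + 2^s √d`. -/
theorem nuq_expected_sparsity (d s : ℕ) (hd : 1 ≤ d) (hs : 1 ≤ s)
    (v : EuclideanSpace ℝ (Fin d)) (hv : v ≠ 0) :
    (∫ u, (({i : Fin d | quant (nuqLevels s) s v u i ≠ 0}).ncard : ℝ) ∂(unifCube d)) ≤
      2 ^ (2 * s) + 2 ^ s * Real.sqrt d := by
  classical
  have hN : (0:ℝ) < ‖v‖ := norm_pos_iff.mpr hv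
  set r : Fin d → ℝ := fun i => |v i| / ‖v‖ with hr_def
  have hr0 : ∀ i, 0 ≤ r i := fun i => by positivity
  -- pointwise rewrite of the integrand
  have hpt : ∀ u : Fin d → ℝ, (({i : Fin d | quant (nuqLevels s) s v u i ≠ 0}).ncard : ℝ)
      = ∑ i : Fin d,
          Set.indicator {u' : Fin d → ℝ | quant (nuqLevels s) s v u' i ≠ 0}
            (fun _ => (1:ℝ)) u := by
    intro u
    rw [Set.ncard_eq_toFinset_card', Set.toFinset_setOf, Finset.card_filter]
    push_cast
    exact Finset.sum_congr rfl (fun i _ => by simp [Set.indicator_apply])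
  have hint : (∫ u, (({i : Fin d | quant (nuqLevels s) s v u i ≠ 0}).ncard : ℝ) ∂(unifCube d))
      = ∑ i : Fin d,
          ((unifCube d) {u : Fin d → ℝ | quant (nuqLevels s) s v u i ≠ 0}).toReal := by
    rw [integral_congr_ae (Filter.Eventually.of_forall hpt), integral_finset_sum]
    · exact Finset.sum_congr rfl (fun i _ => by
        rw [integral_indicator_const (1:ℝ) (coord_bound d s hs v hv i).1]; simp; rfl)
    · exact fun i _ => (integrable_const (1:ℝ)).indicator (coord_bound d s hs v hv i).1
  rw [hint]
  -- sum of squares is 1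
  have hss : ∑ i, r i ^ 2 = 1 := by
    have h2 : ∑ i, |v i| ^ 2 = ‖v‖ ^ 2 := by
      rw [EuclideanSpace.norm_eq, Real.sq_sqrt (by positivity)]
      exact Finset.sum_congr rfl (fun i _ => by rw [Real.norm_eq_abs])
    simp only [hr_def, div_pow]
    rw [← Finset.sum_div, h2, div_self (by positivity)]
  -- per-coordinate bound
  have hm : ∀ i : Fin d,
      ((unifCube d) {u : Fin d → ℝ | quant (nuqLevels s) s v u i ≠ 0}).toReal ≤
        (if (2:ℝ) ^ (-(s:ℤ)) ≤ r i then (1:ℝ) else 0) + 2 ^ s * r i := by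
    intro i
    refine le_trans (coord_bound d s hs v hv i).2 ?_
    by_cases h : (2:ℝ) ^ (-(s:ℤ)) ≤ r i
    · rw [if_pos h, if_pos h]
      have : (0:ℝ) ≤ 2 ^ s * r i := by positivity
      linarith
    · rw [if_neg h, if_neg h, zero_add]
  -- card bound
  have hcard : ((Finset.univ.filter (fun i : Fin d => (2:ℝ) ^ (-(s:ℤ)) ≤ r i)).card : ℝ)
      ≤ 2 ^ (2 * s) := by
    set A := Finset.univ.filter (fun i : Fin d => (2:ℝ) ^ (-(s:ℤ)) ≤ r i) with hA
    have h1 : (A.card : ℝ) * ((2:ℝ) ^ (-(s:ℤ))) ^ 2 ≤ 1 := by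
      calc (A.card : ℝ) * ((2:ℝ) ^ (-(s:ℤ))) ^ 2
          = ∑ _i ∈ A, ((2:ℝ) ^ (-(s:ℤ))) ^ 2 := by rw [Finset.sum_const, nsmul_eq_mul]
        _ ≤ ∑ i ∈ A, r i ^ 2 := Finset.sum_le_sum (fun i hi => by
            have hri := (Finset.mem_filter.mp hi).2
            have h0 : (0:ℝ) ≤ 2 ^ (-(s:ℤ)) := by positivity
            nlinarith)
        _ ≤ ∑ i, r i ^ 2 := Finset.sum_le_sum_of_subset_of_nonneg
            (Finset.filter_subset _ _) (fun i _ _ => sq_nonneg _)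
        _ = 1 := hss
    have h2 : ((2:ℝ) ^ (-(s:ℤ))) ^ 2 = ((2:ℝ) ^ (2 * s))⁻¹ := by
      rw [← zpow_natCast (2:ℝ) (2 * s), ← zpow_neg, ← zpow_natCast ((2:ℝ) ^ (-(s:ℤ))) 2, ← zpow_mul]
      congr 1; push_cast; ring
    rw [h2] at h1
    have hp : (0:ℝ) < 2 ^ (2 * s) := by positivity
    calc (A.card : ℝ) = (A.card : ℝ) * (2 ^ (2 * s))⁻¹ * 2 ^ (2 * s) := by field_simp
      _ ≤ 1 * 2 ^ (2 * s) := mul_le_mul_of_nonneg_right h1 (le_of_lt hp)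
      _ = 2 ^ (2 * s) := one_mul _
  -- sum of r bound
  have hsumr : ∑ i, r i ≤ Real.sqrt d := by
    have h1 : (∑ i, r i) ^ 2 ≤ (d:ℝ) := by
      have := sq_sum_le_card_mul_sum_sq (s := Finset.univ) (f := r)
      simpa [hss] using this
    have h2 : 0 ≤ ∑ i, r i := Finset.sum_nonneg (fun i _ => hr0 i)
    have := Real.sqrt_le_sqrt h1
    rwa [Real.sqrt_sq h2] at this
  calc ∑ i : Fin d, ((unifCube d) {u : Fin d → ℝ | quant (nuqLevels s) s v u i ≠ 0}).toReal
      ≤ ∑ i : Fin d, ((if (2:ℝ) ^ (-(s:ℤ)) ≤ r i then (1:ℝ) else 0) + 2 ^ s * r i) :=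
        Finset.sum_le_sum (fun i _ => hm i)
    _ = ((Finset.univ.filter (fun i : Fin d => (2:ℝ) ^ (-(s:ℤ)) ≤ r i)).card : ℝ)
        + 2 ^ s * ∑ i, r i := by
        rw [Finset.sum_add_distrib, ← Finset.mul_sum, Finset.sum_boole]
    _ ≤ 2 ^ (2 * s) + 2 ^ s * Real.sqrt d :=
        add_le_add hcard (mul_le_mul_of_nonneg_left hsumr (by positivity))
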